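/- For every k ≥ 1 there exists a house allocation instance with m = 2^k applicants such that the number of reachable houses (houses in the image of at least one Pareto optimal matching) is at least (m/2)·log₂(4m) = (k+2)·2^{k-1}. -/

import Mathlib

/-- `S` is a blocking coalition of the matching `τ`. -/
def IsBlocking {A B : Type*} (pref : A → B → B → Prop) (τ : A → B) (S : Set A) : Prop :=
  S.Nonempty ∧ ∃ τ' : A → B, Function.Injective τ' ∧
    (∀ a ∉ S, τ' a = τ a) ∧ ∀ a ∈ S, pref a (τ' a) (τ a)

/-- `τ` is a Pareto optimal matching. -/
def IsPOM {A B : Type*} (pref : A → B → B → Prop) (τ : A → B) : Prop :=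
  Function.Injective τ ∧ ∀ S : Set A, ¬ IsBlocking pref τ S

namespace Stmt15aux

/-- serial-dictatorship sufficient condition for Pareto optimality:
if every house an applicant strictly prefers to his own is taken by an
applicant of strictly smaller priority, the matching is Pareto optimal. -/
theorem greedy_pom {A B : Type*} (pref : A → B → B → Prop) (τ : A → B)
    (inj : Function.Injective τ) (σ : A → ℕ)
    (h : ∀ a x, pref a x (τ a) → ∃ a', σ a' < σ a ∧ τ a' = x) :
    IsPOM pref τ := by
  refine ⟨inj, ?_⟩
  rintro S ⟨hne, τ', inj', heq, himp⟩
  obtain ⟨n, ⟨a, haS, rfl⟩, hmin⟩ :=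
    (wellFounded_lt (α := ℕ)).has_min (σ '' S) (hne.image σ)
  obtain ⟨a', ha', hta'⟩ := h a (τ' a) (himp a haS)
  have haS' : a' ∉ S := fun hm => hmin (σ a') ⟨a', hm, rfl⟩ ha'
  have h2 : τ' a' = τ' a := by rw [heq a' haS', hta']
  have h3 : a' = a := inj' h2
  rw [h3] at ha'
  exact lt_irrefl _ ha'


/-- division by a larger power of two preserves equality -/
lemma div_pow_mono {a b i j : ℕ} (h : a / 2^i = b / 2^i) (hij : i ≤ j) :
    a / 2^j = b / 2^j := by
  have : (2:ℕ)^j = 2^i * 2^(j-i) := by rw [← pow_add]; congr 1; omega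
  rw [this, ← Nat.div_div_eq_div_mul, ← Nat.div_div_eq_div_mul, h]

lemma div_succ_decomp (a j : ℕ) : a / 2^j = 2 * (a / 2^(j+1)) + (a / 2^j) % 2 := by
  conv_lhs => rw [← Nat.div_add_mod (a / 2^j) 2]
  rw [Nat.div_div_eq_div_mul, ← pow_succ]

lemma bit_ne {a b j : ℕ} (h1 : a / 2^(j+1) = b / 2^(j+1)) (h2 : a / 2^j ≠ b / 2^j) :
    (a / 2^j) % 2 ≠ (b / 2^j) % 2 := by
  intro heq
  exact h2 (by rw [div_succ_decomp a j, div_succ_decomp b j, h1, heq])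

lemma decomp (a j : ℕ) :
    a = 2^(j+1) * (a / 2^(j+1)) + 2^j * ((a / 2^j) % 2) + a % 2^j := by
  have h1 := Nat.div_add_mod a (2^j)
  have h2 := div_succ_decomp a j
  calc a = 2^j * (a / 2^j) + a % 2^j := h1.symm
    _ = 2^j * (2 * (a / 2^(j+1)) + (a / 2^j) % 2) + a % 2^j := by rw [← h2]
    _ = 2^(j+1) * (a / 2^(j+1)) + 2^j * ((a / 2^j) % 2) + a % 2^j := by rw [pow_succ]; ring

section put
variable {hi bit lo j m : ℕ} (hbit : bit < 2) (hlo : lo < 2^j)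

lemma put_rest_lt (hbit : bit < 2) (hlo : lo < 2^j) : 2^j * bit + lo < 2^(j+1) := by
  have h1 : 2^j * bit ≤ 2^j * 1 := Nat.mul_le_mul_left _ (by omega)
  have h2 : (2:ℕ)^(j+1) = 2^j * 2 := pow_succ 2 j
  omega

lemma put_div (hbit : bit < 2) (hlo : lo < 2^j) :
    (2^(j+1) * hi + 2^j * bit + lo) / 2^(j+1) = hi := by
  rw [add_assoc, Nat.mul_add_div (Nat.two_pow_pos _),
    Nat.div_eq_of_lt (put_rest_lt hbit hlo), add_zero]

lemma put_mod (hbit : bit < 2) (hlo : lo < 2^j) :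
    (2^(j+1) * hi + 2^j * bit + lo) % 2^j = lo := by
  have : 2^(j+1) * hi + 2^j * bit + lo = 2^j * (2 * hi + bit) + lo := by
    rw [pow_succ]; ring
  rw [this, Nat.mul_add_mod, Nat.mod_eq_of_lt hlo]

lemma put_bit (hbit : bit < 2) (hlo : lo < 2^j) :
    ((2^(j+1) * hi + 2^j * bit + lo) / 2^j) % 2 = bit := by
  have h : 2^(j+1) * hi + 2^j * bit + lo = 2^j * (2 * hi + bit) + lo := by
    rw [pow_succ]; ring
  rw [h, Nat.mul_add_div (Nat.two_pow_pos _),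
    Nat.div_eq_of_lt hlo, add_zero, Nat.mul_add_mod, Nat.mod_eq_of_lt hbit]

lemma put_lt_pow {k : ℕ} (hjk : j < k) (hhi : hi < 2^(k-j-1)) (hbit : bit < 2)
    (hlo : lo < 2^j) : 2^(j+1) * hi + 2^j * bit + lo < 2^k := by
  have h1 : 2^j * bit + lo < 2^(j+1) := put_rest_lt hbit hlo
  have h2 : 2^(j+1) * hi + 2^(j+1) ≤ 2^(j+1) * 2^(k-j-1) := by
    have : hi + 1 ≤ 2^(k-j-1) := hhi
    calc 2^(j+1) * hi + 2^(j+1) = 2^(j+1) * (hi + 1) := by ring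
      _ ≤ 2^(j+1) * 2^(k-j-1) := Nat.mul_le_mul_left _ this
  have h3 : (2:ℕ)^(j+1) * 2^(k-j-1) = 2^k := by rw [← pow_add]; congr 1; omega
  omega

end put

lemma div_lt_high {a j k : ℕ} (hjk : j < k) (ha : a < 2^k) : a / 2^(j+1) < 2^(k-j-1) := by
  rw [Nat.div_lt_iff_lt_mul (Nat.two_pow_pos _)]
  calc a < 2^k := ha
    _ = 2^(k-j-1) * 2^(j+1) := by rw [← pow_add]; congr 1; omega


/-- the house index claimed by applicant `a` at level `j` (bit `j` deleted). -/
def c (j a : ℕ) : ℕ := 2^j * (a / 2^(j+1)) + a % 2^j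

lemma c_div (j a : ℕ) : c j a / 2^j = a / 2^(j+1) := by
  unfold c
  rw [Nat.mul_add_div (Nat.two_pow_pos _),
    Nat.div_eq_of_lt (Nat.mod_lt _ (Nat.two_pow_pos _)), add_zero]

lemma c_mod (j a : ℕ) : c j a % 2^j = a % 2^j := by
  unfold c
  rw [Nat.mul_add_mod, Nat.mod_mod_of_dvd _ dvd_rfl]

lemma c_lt {k j a : ℕ} (hjk : j < k) (ha : a < 2^k) : c j a < 2^(k-1) := by
  unfold c
  have h1 : a / 2^(j+1) < 2^(k-j-1) := div_lt_high hjk ha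
  have h2 : a % 2^j < 2^j := Nat.mod_lt _ (Nat.two_pow_pos _)
  have h3 : 2^j * (a / 2^(j+1)) + a % 2^j < 2^j * (a / 2^(j+1) + 1) := by
    rw [Nat.mul_add, Nat.mul_one]; omega
  have h4 : 2^j * (a / 2^(j+1) + 1) ≤ 2^j * 2^(k-j-1) := Nat.mul_le_mul_left _ h1
  have h5 : (2:ℕ)^j * 2^(k-j-1) = 2^(k-1) := by rw [← pow_add]; congr 1; omega
  omega

lemma c_eq_of (j a a' : ℕ) (h1 : a / 2^(j+1) = a' / 2^(j+1)) (h2 : a % 2^j = a' % 2^j) :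
    c j a = c j a' := by unfold c; rw [h1, h2]

/-- highest bit at which `a` and `b` differ -/
def pidx (k a b : ℕ) : ℕ := Nat.findGreatest (fun j => a / 2^j ≠ b / 2^j) k

lemma pidx_spec {k a b : ℕ} (ha : a < 2^k) (hb : b < 2^k) (hne : a ≠ b) :
    a / 2^(pidx k a b + 1) = b / 2^(pidx k a b + 1) ∧
      a / 2^(pidx k a b) ≠ b / 2^(pidx k a b) ∧ pidx k a b < k := by
  classical
  set P : ℕ → Prop := fun j => a / 2^j ≠ b / 2^j with hP
  have h0 : P 0 := by simpa [P] using hne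
  have hspec : P (pidx k a b) := Nat.findGreatest_spec (Nat.zero_le k) h0
  have hle : pidx k a b ≤ k := Nat.findGreatest_le k
  have hnk : ¬ P k := by
    simp only [P, not_not]
    rw [Nat.div_eq_of_lt ha, Nat.div_eq_of_lt hb]
  have hlt : pidx k a b < k := by
    rcases lt_or_eq_of_le hle with h | h
    · exact h
    · exact absurd (h ▸ hspec) hnk
  refine ⟨?_, hspec, hlt⟩
  have hP1 : ¬ P (pidx k a b + 1) :=
    Nat.findGreatest_is_greatest (Nat.lt_succ_self _) hlt
  simpa [P, not_not] using hP1

lemma pidx_eq {k a b j : ℕ} (hj : j < k) (h1 : a / 2^(j+1) = b / 2^(j+1))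
    (h2 : a / 2^j ≠ b / 2^j) : pidx k a b = j := by
  classical
  have hge : j ≤ pidx k a b := Nat.le_findGreatest hj.le h2
  rcases lt_or_eq_of_le hge with h | h
  · exfalso
    have hle : pidx k a b ≤ k := Nat.findGreatest_le k
    have hspec : a / 2^(pidx k a b) ≠ b / 2^(pidx k a b) :=
      Nat.findGreatest_spec (P := fun j => a / 2^j ≠ b / 2^j) (Nat.zero_le k)
        (by simpa using fun hab => h2 (by rw [hab]))
    exact hspec (div_pow_mono h1 h)
  · exact h.symm


/-! ### the instance -/

/-- House type: `2^k` "leaf" houses plus `k · 2^(k-1)` "internal" houses. -/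
abbrev Hty (k : ℕ) := Fin (2^k) ⊕ (Fin k × Fin (2^(k-1)))

/-- the matching aiming at giving applicant `b` his leaf house: every other
applicant `a` goes to the shared house at the highest level where `a`
differs from `b`. -/
def tau (k : ℕ) (b a : Fin (2^k)) : Hty k :=
  if h : a = b then Sum.inl b
  else
    have hne : a.val ≠ b.val := fun hv => h (Fin.val_injective hv)
    Sum.inr (⟨pidx k a.val b.val, (pidx_spec a.isLt b.isLt hne).2.2⟩,
      ⟨c (pidx k a.val b.val) a.val, c_lt (pidx_spec a.isLt b.isLt hne).2.2 a.isLt⟩)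

/-- priority order certifying that `tau k b` is Pareto optimal. -/
def sigma (k : ℕ) (b a : Fin (2^k)) : ℕ :=
  if a = b then k else k - 1 - pidx k a.val b.val

/-- rank function of applicant `a` (smaller = better):
claimed internal houses by decreasing level, then own leaf house, then junk. -/
def r (k : ℕ) (a : Fin (2^k)) : Hty k → ℕ
  | Sum.inl x => if x = a then k else k + 1 + x.val
  | Sum.inr jt => if jt.2.val = c jt.1.val a.val then k - 1 - jt.1.val
      else k + 1 + 2^k + jt.1.val * 2^(k-1) + jt.2.val

lemma tau_self (k : ℕ) (b : Fin (2^k)) : tau k b b = Sum.inl b := by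
  simp [tau]

lemma tau_ne (k : ℕ) {b a : Fin (2^k)} (h : a ≠ b) (hne : a.val ≠ b.val) :
    tau k b a = Sum.inr (⟨pidx k a.val b.val, (pidx_spec a.isLt b.isLt hne).2.2⟩,
      ⟨c (pidx k a.val b.val) a.val,
        c_lt (pidx_spec a.isLt b.isLt hne).2.2 a.isLt⟩) := by
  simp [tau, h]

lemma tau_inj (k : ℕ) (b : Fin (2^k)) : Function.Injective (tau k b) := by
  intro a1 a2 h
  by_cases h1 : a1 = b <;> by_cases h2 : a2 = b
  · rw [h1, h2]
  · rw [h1] at h ⊢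
    rw [tau_self, tau_ne k h2 (fun hv => h2 (Fin.val_injective hv))] at h
    exact absurd h (by simp)
  · rw [h2] at h ⊢
    rw [tau_self, tau_ne k h1 (fun hv => h1 (Fin.val_injective hv))] at h
    exact absurd h (by simp)
  · have hv1 : a1.val ≠ b.val := fun hv => h1 (Fin.val_injective hv)
    have hv2 : a2.val ≠ b.val := fun hv => h2 (Fin.val_injective hv)
    rw [tau_ne k h1 hv1, tau_ne k h2 hv2] at h
    injection h with h
    obtain ⟨hj, hc⟩ := Prod.mk.injEq .. ▸ h
    have hjv : pidx k a1.val b.val = pidx k a2.val b.val := congrArg Fin.val hj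
    have hcv : c (pidx k a1.val b.val) a1.val = c (pidx k a2.val b.val) a2.val :=
      congrArg Fin.val hc
    set j := pidx k a1.val b.val with hjdef
    rw [← hjv] at hcv
    obtain ⟨hs1, hd1, hk1⟩ := pidx_spec a1.isLt b.isLt hv1
    obtain ⟨hs2, hd2, hk2⟩ := pidx_spec a2.isLt b.isLt hv2
    rw [← hjv] at hs2 hd2
    -- from equality of `c`: high and low parts agree
    have hhi : a1.val / 2^(j+1) = a2.val / 2^(j+1) := by
      have := congrArg (· / 2^j) hcv
      simpa [c_div] using this
    have hlo : a1.val % 2^j = a2.val % 2^j := by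
      have := congrArg (· % 2^j) hcv
      simpa [c_mod] using this
    -- bits at position j both differ from b's bit, hence agree
    have hb1 : (a1.val / 2^j) % 2 ≠ (b.val / 2^j) % 2 := bit_ne hs1 hd1
    have hb2 : (a2.val / 2^j) % 2 ≠ (b.val / 2^j) % 2 := bit_ne hs2 hd2
    have hbit : (a1.val / 2^j) % 2 = (a2.val / 2^j) % 2 := by
      have m1 : (a1.val / 2^j) % 2 < 2 := Nat.mod_lt _ (by norm_num)
      have m2 : (a2.val / 2^j) % 2 < 2 := Nat.mod_lt _ (by norm_num)
      have m3 : (b.val / 2^j) % 2 < 2 := Nat.mod_lt _ (by norm_num)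
      omega
    apply Fin.val_injective
    rw [decomp a1.val j, decomp a2.val j, hhi, hlo, hbit]


lemma encode_inj {M j1 t1 j2 t2 : ℕ} (h1 : t1 < M) (h2 : t2 < M)
    (h : j1 * M + t1 = j2 * M + t2) : j1 = j2 ∧ t1 = t2 := by
  have hM : 0 < M := by omega
  have e1 : (j1 * M + t1) / M = j1 := by
    rw [mul_comm, Nat.mul_add_div hM, Nat.div_eq_of_lt h1, add_zero]
  have e2 : (j2 * M + t2) / M = j2 := by
    rw [mul_comm, Nat.mul_add_div hM, Nat.div_eq_of_lt h2, add_zero]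
  have hj : j1 = j2 := by rw [← e1, ← e2, h]
  subst hj
  exact ⟨rfl, Nat.add_left_cancel h⟩

lemma r_inj (k : ℕ) (hk : 1 ≤ k) (a : Fin (2^k)) : Function.Injective (r k a) := by
  intro y1 y2 h
  match y1, y2 with
  | Sum.inl x1, Sum.inl x2 =>
    simp only [r] at h
    split_ifs at h with e1 e2 e2
    · rw [e1, e2]
    · omega
    · omega
    · exact congrArg Sum.inl (Fin.val_injective (by omega))
  | Sum.inl x1, Sum.inr jt2 =>
    exfalso
    simp only [r] at h
    have hj2 : jt2.1.val < k := jt2.1.isLt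
    have hx1 : x1.val < 2^k := x1.isLt
    split_ifs at h with e1 e2 e2 <;>
      [skip; generalize jt2.1.val * 2^(k-1) = J at h; skip;
        generalize jt2.1.val * 2^(k-1) = J at h] <;> omega
  | Sum.inr jt1, Sum.inl x2 =>
    exfalso
    simp only [r] at h
    have hj1 : jt1.1.val < k := jt1.1.isLt
    have hx2 : x2.val < 2^k := x2.isLt
    split_ifs at h with e1 e2 e2 <;>
      [skip; skip; generalize jt1.1.val * 2^(k-1) = J at h;
        generalize jt1.1.val * 2^(k-1) = J at h] <;> omega
  | Sum.inr jt1, Sum.inr jt2 =>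
    simp only [r] at h
    have hj1 : jt1.1.val < k := jt1.1.isLt
    have hj2 : jt2.1.val < k := jt2.1.isLt
    have ht1 : jt1.2.val < 2^(k-1) := jt1.2.isLt
    have ht2 : jt2.2.val < 2^(k-1) := jt2.2.isLt
    split_ifs at h with e1 e2 e2
    · have hj : jt1.1.val = jt2.1.val := by omega
      have ht : jt1.2.val = jt2.2.val := by rw [e1, e2, hj]
      exact congrArg Sum.inr (Prod.ext (Fin.val_injective hj) (Fin.val_injective ht))
    · exfalso
      have hle : k - 1 - jt1.1.val ≤ k := by omega
      rw [h] at hle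
      generalize jt2.1.val * 2^(k-1) = J at hle
      generalize (2:ℕ)^k = P at hle
      omega
    · exfalso
      have hle : k - 1 - jt2.1.val ≤ k := by omega
      rw [← h] at hle
      generalize jt1.1.val * 2^(k-1) = J at hle
      generalize (2:ℕ)^k = P at hle
      omega
    · have h' : jt1.1.val * 2^(k-1) + jt1.2.val = jt2.1.val * 2^(k-1) + jt2.2.val := by
        generalize hJ1 : jt1.1.val * 2^(k-1) = J1 at h
        generalize hJ2 : jt2.1.val * 2^(k-1) = J2 at h
        omega
      obtain ⟨hj, ht⟩ := encode_inj ht1 ht2 h'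
      exact congrArg Sum.inr (Prod.ext (Fin.val_injective hj) (Fin.val_injective ht))

lemma flip_tau (k : ℕ) (b a : Fin (2^k)) {j : ℕ} (hj : j < k)
    (hdiv : a.val / 2^j = b.val / 2^j) (t : Fin (2^(k-1))) (ht : t.val = c j a.val) :
    ∃ a' : Fin (2^k), sigma k b a' = k - 1 - j ∧
      tau k b a' = Sum.inr (⟨j, hj⟩, t) := by
  have pos : (0:ℕ) < 2^j := Nat.two_pow_pos _
  set bit := 1 - (a.val / 2^j) % 2 with hbitdef
  have hm2 : (a.val / 2^j) % 2 < 2 := Nat.mod_lt _ (by norm_num)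
  have hbit2 : bit < 2 := by omega
  have hlo : a.val % 2^j < 2^j := Nat.mod_lt _ pos
  have hhi : a.val / 2^(j+1) < 2^(k-j-1) := div_lt_high hj a.isLt
  have hA'lt : 2^(j+1) * (a.val / 2^(j+1)) + 2^j * bit + a.val % 2^j < 2^k :=
    put_lt_pow hj hhi hbit2 hlo
  set a' : Fin (2^k) := ⟨2^(j+1) * (a.val / 2^(j+1)) + 2^j * bit + a.val % 2^j, hA'lt⟩
    with ha'
  have hd1 : a'.val / 2^(j+1) = a.val / 2^(j+1) := put_div hbit2 hlo
  have hd0 : a'.val % 2^j = a.val % 2^j := put_mod hbit2 hlo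
  have hb' : (a'.val / 2^j) % 2 = bit := put_bit hbit2 hlo
  have hbne : (a'.val / 2^j) % 2 ≠ (b.val / 2^j) % 2 := by
    have hbb : (b.val / 2^j) % 2 = (a.val / 2^j) % 2 := by rw [hdiv]
    rw [hb', hbb]
    omega
  have hdne : a'.val / 2^j ≠ b.val / 2^j := fun hh => hbne (by rw [hh])
  have hdeq : a'.val / 2^(j+1) = b.val / 2^(j+1) := by
    rw [hd1]; exact div_pow_mono hdiv (Nat.le_succ j)
  have hp : pidx k a'.val b.val = j := pidx_eq hj hdeq hdne
  have hne' : a'.val ≠ b.val := fun hh => hdne (by rw [hh])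
  have hane : a' ≠ b := fun hh => hne' (congrArg Fin.val hh)
  refine ⟨a', ?_, ?_⟩
  · rw [sigma, if_neg hane, hp]
  · rw [tau_ne k hane hne']
    congr 1
    refine Prod.ext (Fin.val_injective ?_) (Fin.val_injective ?_)
    · exact hp
    · show c (pidx k a'.val b.val) a'.val = t.val
      rw [hp, ht]
      exact c_eq_of j a'.val a.val hd1 hd0

lemma tau_surj (k : ℕ) (y : Hty k) : ∃ b a, tau k b a = y := by
  match y with
  | Sum.inl x => exact ⟨x, x, tau_self k x⟩
  | Sum.inr jt =>
    have pos : (0:ℕ) < 2^jt.1.val := Nat.two_pow_pos _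
    have hj : jt.1.val < k := jt.1.isLt
    have ht : jt.2.val < 2^(k-1) := jt.2.isLt
    have hhi : jt.2.val / 2^jt.1.val < 2^(k-jt.1.val-1) := by
      rw [Nat.div_lt_iff_lt_mul pos]
      calc jt.2.val < 2^(k-1) := ht
        _ ≤ 2^(k-jt.1.val-1) * 2^jt.1.val := by rw [← pow_add]; apply Nat.pow_le_pow_right <;> omega
    have hlo : jt.2.val % 2^jt.1.val < 2^jt.1.val := Nat.mod_lt _ pos
    have hA0 : 2^(jt.1.val+1) * (jt.2.val / 2^jt.1.val) + 2^jt.1.val * 0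
        + jt.2.val % 2^jt.1.val < 2^k := put_lt_pow hj hhi (by norm_num) hlo
    set b : Fin (2^k) := ⟨_, hA0⟩ with hb
    have hcb : c jt.1.val b.val = jt.2.val := by
      unfold c
      rw [put_div (by norm_num) hlo, put_mod (by norm_num) hlo]
      exact Nat.div_add_mod jt.2.val (2^jt.1.val)
    obtain ⟨a', _, htau⟩ := flip_tau k b b hj rfl jt.2 hcb.symm
    exact ⟨b, a', htau⟩

lemma greedy_cond (k : ℕ) (hk : 1 ≤ k) (b a : Fin (2^k)) (y : Hty k)
    (hy : r k a y < r k a (tau k b a)) :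
    ∃ a', sigma k b a' < sigma k b a ∧ tau k b a' = y := by
  by_cases hab : a = b
  · subst hab
    have hyr : r k a (tau k a a) = k := by rw [tau_self]; simp [r]
    rw [hyr] at hy
    match y with
    | Sum.inl x =>
      exfalso; simp only [r] at hy; split_ifs at hy with e1
      · omega
      · omega
    | Sum.inr jt =>
      simp only [r] at hy
      split_ifs at hy with hcl
      · obtain ⟨a', hs, htau⟩ := flip_tau k a a jt.1.isLt rfl jt.2 hcl
        have hsa : sigma k a a = k := by simp [sigma]
        have hjk : jt.1.val < k := jt.1.isLt
        exact ⟨a', by rw [hs, hsa]; omega, htau⟩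
      · exfalso
        generalize jt.1.val * 2^(k-1) = J at hy
        generalize (2:ℕ)^k = P at hy
        omega
  · have hvne : a.val ≠ b.val := fun hv => hab (Fin.val_injective hv)
    obtain ⟨hs1, hd1, hklt⟩ := pidx_spec a.isLt b.isLt hvne
    have hyr : r k a (tau k b a) = k - 1 - pidx k a.val b.val := by
      rw [tau_ne k hab hvne]; simp [r]
    rw [hyr] at hy
    have hsa : sigma k b a = k - 1 - pidx k a.val b.val := by
      rw [sigma, if_neg hab]
    match y with
    | Sum.inl x =>
      exfalso; simp only [r] at hy; split_ifs at hy with e1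
      · omega
      · omega
    | Sum.inr jt =>
      simp only [r] at hy
      split_ifs at hy with hcl
      · have hjk : jt.1.val < k := jt.1.isLt
        have hpj : pidx k a.val b.val < jt.1.val := by omega
        have hdiv : a.val / 2^jt.1.val = b.val / 2^jt.1.val :=
          div_pow_mono hs1 (by omega)
        obtain ⟨a', hs, htau⟩ := flip_tau k b a jt.1.isLt hdiv jt.2 hcl
        exact ⟨a', by rw [hs, hsa]; omega, htau⟩
      · exfalso
        have hlt : k - 1 - pidx k a.val b.val ≤ k := by omega
        have hy2 : k + 1 + 2^k + jt.1.val * 2^(k-1) + jt.2.val < k :=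
          lt_of_lt_of_le hy hlt
        generalize jt.1.val * 2^(k-1) = J at hy2
        generalize (2:ℕ)^k = P at hy2
        omega

end Stmt15aux

/-- for every `k ≥ 1` there is a house allocation instance with
`m = 2^k` applicants whose number of reachable houses is at least
`(k+2)·2^(k-1) = (m/2)·log₂(4m)`. -/
theorem stmt15 (k : ℕ) (hk : 1 ≤ k) :
    ∃ (n : ℕ) (pref : Fin (2 ^ k) → Fin n → Fin n → Prop),
      (∀ a, IsStrictTotalOrder (Fin n) (pref a)) ∧ 2 ^ k ≤ n ∧
      (k + 2) * 2 ^ (k - 1) ≤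
        {b : Fin n | ∃ τ : Fin (2 ^ k) → Fin n,
          IsPOM pref τ ∧ b ∈ Set.range τ}.ncard := by
  classical
  have hcard : Fintype.card (Stmt15aux.Hty k) = 2^k + k * 2^(k-1) := by
    simp [Stmt15aux.Hty]
  obtain ⟨e⟩ : Nonempty (Stmt15aux.Hty k ≃ Fin (2^k + k * 2^(k-1))) :=
    ⟨Fintype.equivFinOfCardEq hcard⟩
  refine ⟨2^k + k * 2^(k-1),
    fun a x y => Stmt15aux.r k a (e.symm x) < Stmt15aux.r k a (e.symm y), ?_, ?_, ?_⟩
  · intro a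
    refine { trichotomous := ?_, irrefl := ?_, trans := ?_ }
    · intro x y hxy hyx
      rcases lt_trichotomy (Stmt15aux.r k a (e.symm x)) (Stmt15aux.r k a (e.symm y))
        with h | h | h
      · exact absurd h hxy
      · exact e.symm.injective (Stmt15aux.r_inj k hk a h)
      · exact absurd h hyx
    · intro x
      exact lt_irrefl _
    · intro x y z h1 h2
      exact lt_trans h1 h2
  · exact Nat.le_add_right _ _
  · have huniv : {b : Fin (2^k + k * 2^(k-1)) |
        ∃ τ : Fin (2^k) → Fin (2^k + k * 2^(k-1)),
          IsPOM (fun a x y => Stmt15aux.r k a (e.symm x) < Stmt15aux.r k a (e.symm y)) τ ∧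
            b ∈ Set.range τ} = Set.univ := by
      apply Set.eq_univ_of_forall
      intro x
      obtain ⟨b, a0, hba⟩ := Stmt15aux.tau_surj k (e.symm x)
      refine ⟨fun a => e (Stmt15aux.tau k b a), ?_,
        ⟨a0, show e (Stmt15aux.tau k b a0) = x from by
          rw [hba, Equiv.apply_symm_apply]⟩⟩
      apply Stmt15aux.greedy_pom _ _ (e.injective.comp (Stmt15aux.tau_inj k b))
        (Stmt15aux.sigma k b)
      intro a x' hx'
      simp only [Function.comp_apply, Equiv.symm_apply_apply] at hx'
      obtain ⟨a', h1, h2⟩ := Stmt15aux.greedy_cond k hk b a (e.symm x') hx'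
      exact ⟨a', h1, show e (Stmt15aux.tau k b a') = x' from by
        rw [h2, Equiv.apply_symm_apply]⟩
    rw [huniv, Set.ncard_univ, Nat.card_eq_fintype_card, Fintype.card_fin]
    have h2k : 2 * 2^(k-1) = 2^k := by
      rw [← pow_succ']
      congr 1
      omega
    have hcalc : (k+2) * 2^(k-1) = 2^k + k * 2^(k-1) := by
      calc (k+2) * 2^(k-1) = 2 * 2^(k-1) + k * 2^(k-1) := by ring
        _ = 2^k + k * 2^(k-1) := by rw [h2k]
    exact hcalc.le
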